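/- Let ρ = diag(μ_1,...,μ_d) with μ_1 > μ_2 > ... > μ_d > 0 and Σμ_i = 1. Define d_i := E_{ii} − μ_i·1 for 1 ≤ i ≤ d−1; for 1 ≤ j < k ≤ d define T_{jk} := i(E_{jk} − E_{kj}) and T_{kj} := E_{jk} + E_{kj}, and for j ≠ k set t_{jk} := T_{jk}/√(2|μ_j − μ_k|). Then: (i) Tr(ρ (d_i ∘ d_j)) = δ_{ij} μ_i − μ_i μ_j for 1 ≤ i,j ≤ d−1; (ii) for j < k, (i/2) Tr(ρ [t_{jk}, t_{kj}]) = −1/2, and (i/2) Tr(ρ [t_{jk}, t_{lm}]) = 0 whenever {j,k} ≠ {l,m}; (iii) for j ≠ k, Tr(ρ t_{jk}²) = (μ_j + μ_k)/(2|μ_j − μ_k|) > 1/2. -/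

import Mathlib

open scoped BigOperators
open Matrix

/-- `d_i := E_{ii} − μ_i·1`. -/
noncomputable def dMat {d : ℕ} (μ : Fin d → ℝ) (i : Fin d) : Matrix (Fin d) (Fin d) ℂ :=
  Matrix.single i i 1 - (μ i : ℂ) • (1 : Matrix (Fin d) (Fin d) ℂ)

/-- For `j < k`, `T_{jk} := i(E_{jk} − E_{kj})`, and `T_{kj} := E_{jk} + E_{kj}`. -/
noncomputable def TMat {d : ℕ} (a b : Fin d) : Matrix (Fin d) (Fin d) ℂ :=
  if a < b then
    Complex.I • (Matrix.single a b 1 - Matrix.single b a 1)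
  else
    Matrix.single b a 1 + Matrix.single a b 1

lemma tr_diag_std {d : ℕ} (f : Fin d → ℂ) (a b : Fin d) :
    (Matrix.diagonal f * Matrix.single a b (1:ℂ)).trace = if a = b then f a else 0 := by
  simp only [Matrix.trace, Matrix.diag, Matrix.diagonal_mul, Matrix.single,
    Matrix.of_apply, mul_ite, mul_one, mul_zero]
  rw [Finset.sum_congr rfl (fun x _ => ?_),
    Finset.sum_ite_eq' Finset.univ a (fun x => if b = x then f x else 0)]
  · simp [eq_comm]
  · by_cases h1 : x = a <;> by_cases h2 : b = x <;> simp_all [eq_comm]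

lemma tr_key {d : ℕ} (f : Fin d → ℂ) (a b c e : Fin d) :
    (Matrix.diagonal f * (Matrix.single a b (1:ℂ) * Matrix.single c e 1)).trace
      = if b = c ∧ e = a then f a else 0 := by
  rcases eq_or_ne b c with h | h
  · subst h
    rw [Matrix.single_mul_single_same, one_mul, tr_diag_std]
    simp [eq_comm, and_comm]
  · rw [Matrix.single_mul_single_of_ne (1:ℂ) a b c h, mul_zero, Matrix.trace_zero]
    simp [h]

lemma tr_smul_pair {d : ℕ} (f : Fin d → ℂ) (r s : ℝ) (A B : Matrix (Fin d) (Fin d) ℂ) :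
    (Matrix.diagonal f * (r • A * (s • B))).trace
      = ((r * s : ℝ) : ℂ) * (Matrix.diagonal f * (A * B)).trace := by
  simp only [smul_mul_assoc, mul_smul_comm, Matrix.mul_smul, Matrix.trace_smul, smul_smul]
  rw [Complex.real_smul, mul_comm s r]

lemma tr_TT_pair {d : ℕ} (f : Fin d → ℂ) (j k : Fin d) (h : j < k) :
    (Matrix.diagonal f * (TMat j k * TMat k j)).trace = Complex.I * (f j - f k) := by
  have hne : j ≠ k := ne_of_lt h
  unfold TMat
  rw [if_pos h, if_neg (not_lt.mpr h.le)]
  simp only [smul_mul_assoc, Matrix.sub_mul, Matrix.mul_add, Matrix.add_mul, Matrix.mul_sub,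
    mul_smul_comm, Matrix.mul_smul, Matrix.trace_smul, Matrix.trace_sub, Matrix.trace_add,
    tr_key, hne, hne.symm, and_self, if_true, false_and, and_false, if_false, smul_eq_mul]
  ring

lemma tr_TT_pair' {d : ℕ} (f : Fin d → ℂ) (j k : Fin d) (h : j < k) :
    (Matrix.diagonal f * (TMat k j * TMat j k)).trace = Complex.I * (f k - f j) := by
  have hne : j ≠ k := ne_of_lt h
  unfold TMat
  rw [if_pos h, if_neg (not_lt.mpr h.le)]
  simp only [smul_mul_assoc, Matrix.sub_mul, Matrix.mul_add, Matrix.add_mul, Matrix.mul_sub,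
    mul_smul_comm, Matrix.mul_smul, Matrix.trace_smul, Matrix.trace_sub, Matrix.trace_add,
    tr_key, hne, hne.symm, and_self, if_true, false_and, and_false, if_false, smul_eq_mul]
  ring

lemma tr_TT_zero {d : ℕ} (f : Fin d → ℂ) (j k l m : Fin d)
    (h1 : ¬(j = l ∧ k = m)) (h2 : ¬(j = m ∧ k = l)) :
    (Matrix.diagonal f * (TMat j k * TMat l m)).trace = 0 := by
  have c1 : ¬(k = l ∧ m = j) := fun ⟨x, y⟩ => h2 ⟨y.symm, x⟩
  have c2 : ¬(k = m ∧ l = j) := fun ⟨x, y⟩ => h1 ⟨y.symm, x⟩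
  have c3 : ¬(j = l ∧ m = k) := fun ⟨x, y⟩ => h1 ⟨x, y.symm⟩
  have c4 : ¬(j = m ∧ l = k) := fun ⟨x, y⟩ => h2 ⟨x, y.symm⟩
  unfold TMat
  split_ifs with hx hy hy <;>
  · simp only [Matrix.mul_sub, Matrix.mul_add, Matrix.sub_mul, Matrix.add_mul,
      smul_mul_assoc, mul_smul_comm, Matrix.mul_smul, Matrix.trace_sub, Matrix.trace_add,
      Matrix.trace_smul, tr_key, c1, c2, c3, c4, if_false, if_neg]
    simp

lemma TMat_sq {d : ℕ} (a b : Fin d) (h : a ≠ b) :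
    TMat a b * TMat a b = Matrix.single a a 1 + Matrix.single b b 1 := by
  unfold TMat
  split_ifs with hlt
  · rw [smul_mul_assoc, mul_smul_comm, smul_smul, Complex.I_mul_I]
    rw [Matrix.sub_mul, Matrix.mul_sub, Matrix.mul_sub,
      Matrix.single_mul_single_of_ne (1:ℂ) a b _ h.symm,
      Matrix.single_mul_single_of_ne (1:ℂ) b a _ h,
      Matrix.single_mul_single_same, Matrix.single_mul_single_same]
    simp only [one_mul]
    module
  · rw [Matrix.add_mul, Matrix.mul_add, Matrix.mul_add,
      Matrix.single_mul_single_of_ne (1:ℂ) b a _ h,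
      Matrix.single_mul_single_of_ne (1:ℂ) a b _ h.symm,
      Matrix.single_mul_single_same, Matrix.single_mul_single_same]
    simp only [one_mul]
    abel

/-- `t_{jk} := T_{jk}/√(2|μ_j − μ_k|)`. -/
noncomputable def tMat {d : ℕ} (μ : Fin d → ℝ) (a b : Fin d) :
    Matrix (Fin d) (Fin d) ℂ :=
  (Real.sqrt (2 * |μ a - μ b|))⁻¹ • TMat a b

/-- **The ortho-symplectic basis associated to a non-degenerate density matrix:**
covariances of the classical part, symplectic relations, and thermal variances. -/
theorem stmt16 {d : ℕ} (μ : Fin d → ℝ)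
    (hdec : StrictAnti μ) (hpos : ∀ i, 0 < μ i) (hsum : ∑ i, μ i = 1)
    (ρ : Matrix (Fin d) (Fin d) ℂ)
    (hρ : ρ = Matrix.diagonal fun i => (μ i : ℂ)) :
    -- (i) covariance matrix of the classical part
    (∀ i j : Fin d, (i : ℕ) < d - 1 → (j : ℕ) < d - 1 →
      (ρ * ((2 : ℂ)⁻¹ • (dMat μ i * dMat μ j + dMat μ j * dMat μ i))).trace =
        (if i = j then (μ i : ℂ) else 0) - (μ i : ℂ) * (μ j : ℂ)) ∧
    -- (ii) the basis is symplectic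
    (∀ j k : Fin d, j < k →
      (Complex.I / 2) *
        (ρ * (tMat μ j k * tMat μ k j - tMat μ k j * tMat μ j k)).trace = -(1 / 2)) ∧
    (∀ j k l m : Fin d, j ≠ k → l ≠ m → ({j, k} : Finset (Fin d)) ≠ {l, m} →
      (Complex.I / 2) *
        (ρ * (tMat μ j k * tMat μ l m - tMat μ l m * tMat μ j k)).trace = 0) ∧
    -- (iii) thermal variances
    (∀ j k : Fin d, j ≠ k →
      (ρ * (tMat μ j k * tMat μ j k)).trace =
          (((μ j + μ k) / (2 * |μ j - μ k|) : ℝ) : ℂ) ∧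
        1 / 2 < (μ j + μ k) / (2 * |μ j - μ k|)) := by
  subst hρ
  have hμne : ∀ {a b : Fin d}, a ≠ b → μ a ≠ μ b := fun h => hdec.injective.ne h
  have habs : ∀ {a b : Fin d}, a ≠ b → 0 < 2 * |μ a - μ b| := by
    intro a b h
    have : μ a - μ b ≠ 0 := sub_ne_zero.mpr (hμne h)
    positivity
  have hsq : ∀ {a b : Fin d}, a ≠ b →
      ((Real.sqrt (2 * |μ a - μ b|))⁻¹ * (Real.sqrt (2 * |μ a - μ b|))⁻¹ : ℝ)
        = (2 * |μ a - μ b|)⁻¹ := by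
    intro a b h
    rw [← mul_inv, Real.mul_self_sqrt (habs h).le]
  have htr1 : ((Matrix.diagonal fun i => (μ i : ℂ))).trace = 1 := by
    rw [Matrix.trace_diagonal]
    exact_mod_cast hsum
  refine ⟨?_, ?_, ?_, ?_⟩
  · -- (i)
    intro i j _ _
    rcases eq_or_ne i j with h | h
    · subst h
      simp only [dMat, Matrix.sub_mul, Matrix.mul_sub, Matrix.mul_add, smul_mul_assoc,
        mul_smul_comm, one_mul, mul_one, Matrix.mul_smul, Matrix.trace_sub, Matrix.trace_add,
        Matrix.trace_smul, tr_key, tr_diag_std, htr1, smul_eq_mul]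
      simp only [and_self, if_true]
      ring
    · simp only [dMat, Matrix.sub_mul, Matrix.mul_sub, Matrix.mul_add, smul_mul_assoc,
        mul_smul_comm, one_mul, mul_one, Matrix.mul_smul, Matrix.trace_sub, Matrix.trace_add,
        Matrix.trace_smul, tr_key, tr_diag_std, htr1, smul_eq_mul]
      simp only [h, h.symm, false_and, and_false, if_false, if_neg h, if_true, ite_true]
      ring
  · -- (ii) symplectic, same pair
    intro j k hjk
    have hne : j ≠ k := ne_of_lt hjk
    unfold tMat
    rw [abs_sub_comm (μ k) (μ j)]
    rw [Matrix.mul_sub, Matrix.trace_sub, tr_smul_pair, tr_smul_pair,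
      tr_TT_pair _ j k hjk, tr_TT_pair' _ j k hjk, hsq hne]
    have hjk' : μ k < μ j := hdec hjk
    rw [abs_of_pos (show (0:ℝ) < μ j - μ k by linarith)]
    have h0 : (μ j : ℂ) - (μ k : ℂ) ≠ 0 := by
      rw [← Complex.ofReal_sub]
      exact_mod_cast sub_ne_zero.mpr (hμne hne)
    push_cast
    field_simp
    ring_nf
    rw [Complex.I_sq]
    ring
  · -- (ii) symplectic, different pairs
    intro j k l m hjk hlm hne
    have h1 : ¬(j = l ∧ k = m) := by
      rintro ⟨rfl, rfl⟩; exact hne rfl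
    have h2 : ¬(j = m ∧ k = l) := by
      rintro ⟨rfl, rfl⟩; exact hne (Finset.pair_comm j k)
    have h1' : ¬(l = j ∧ m = k) := fun ⟨x, y⟩ => h1 ⟨x.symm, y.symm⟩
    have h2' : ¬(l = k ∧ m = j) := fun ⟨x, y⟩ => h2 ⟨y.symm, x.symm⟩
    unfold tMat
    rw [Matrix.mul_sub, Matrix.trace_sub, tr_smul_pair, tr_smul_pair,
      tr_TT_zero _ j k l m h1 h2, tr_TT_zero _ l m j k h1' h2']
    ring
  · -- (iii) thermal variances
    intro j k hne
    have habs' : (0:ℝ) < 2 * |μ j - μ k| := habs hne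
    constructor
    · unfold tMat
      rw [tr_smul_pair, TMat_sq j k hne, Matrix.mul_add, Matrix.trace_add,
        tr_diag_std, tr_diag_std, hsq hne]
      simp only [if_pos rfl]
      push_cast
      field_simp
    · rw [div_lt_div_iff₀ (by norm_num) habs']
      have := hpos j
      have := hpos k
      have : |μ j - μ k| < μ j + μ k := by
        rw [abs_lt]; constructor <;> linarith
      linarith
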